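/- Let S ⊆ ℝ^d be non-empty, and let V ⊆ ℝ^d be the common kernel of all elements of L(S), with natural projection π : ℝ^d → ℝ^d/V; then π(ℤ^d) is a full-rank lattice Λ in ℝ^d/V whose dual lattice is canonically identified with L(S). The lattice width of S relative to ℤ^d equals the lattice width of π(S) relative to Λ, and under the identification Λ* = L(S), the set of lattice width directions of S equals that of π(S). -/

import Mathlib

open Set

noncomputable section

section GeneralWidth

variable {W : Type*} [AddCommGroup W] [Module ℝ W]

/-- The width of `S ⊆ W` in the direction of the linear functional `u`. -/
def dirWidth (S : Set W) (u : W →ₗ[ℝ] ℝ) : ℝ := sSup (u '' S) - sInf (u '' S)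

/-- `u` is a lattice direction for `S` relative to the lattice `Λ ⊆ W`: it is a
    nonzero functional taking integer values on `Λ` (i.e. an element of the dual
    lattice) on which `S` is bounded. -/
def IsLatticeDir (Λ S : Set W) (u : W →ₗ[ℝ] ℝ) : Prop :=
  u ≠ 0 ∧ (∀ a ∈ Λ, ∃ n : ℤ, u a = (n : ℝ)) ∧ BddAbove (u '' S) ∧ BddBelow (u '' S)

/-- The lattice width of `S ⊆ W` relative to the lattice `Λ ⊆ W` (`⊤` if there is
    no lattice direction for `S`). -/
def latticeWidth (Λ S : Set W) : EReal :=
  ⨅ u ∈ {u : W →ₗ[ℝ] ℝ | IsLatticeDir Λ S u}, ((dirWidth S u : ℝ) : EReal)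

/-- The set of lattice width directions of `S ⊆ W` relative to the lattice `Λ ⊆ W`. -/
def widthDirs (Λ S : Set W) : Set (W →ₗ[ℝ] ℝ) :=
  {u | IsLatticeDir Λ S u ∧ ((dirWidth S u : ℝ) : EReal) = latticeWidth Λ S}

end GeneralWidth

/-- The standard lattice `ℤ^d ⊆ ℝ^d`. -/
def stdLattice (d : ℕ) : Set (Fin d → ℝ) := {x | ∀ i, ∃ n : ℤ, x i = (n : ℝ)}

/-! ### Auxiliary lemmas -/

-- transfer lemma: rational vectors ℚ-independent are ℝ-independent
lemma ratLI {d : ℕ} {ι : Type*} [Fintype ι] {x : ι → (Fin d → ℚ)}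
    (h : LinearIndependent ℚ x) :
    LinearIndependent ℝ (fun i => (fun k => ((x i k : ℚ) : ℝ))) := by
  rw [Fintype.linearIndependent_iff] at h ⊢
  intro c hc i
  refine (Module.forall_dual_apply_eq_zero_iff ℚ (c i)).mp (fun f => ?_)
  refine h (fun j => f (c j)) ?_ i
  funext k
  have hck : ∑ j, c j * ((x j k : ℚ) : ℝ) = 0 := by
    have := congrFun hc k
    simpa using this
  have h0 : ∑ j, (x j k) • (c j) = (0:ℝ) := by
    rw [← hck]
    refine Finset.sum_congr rfl (fun j _ => ?_)
    rw [Rat.smul_def, mul_comm]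
  calc (∑ j, f (c j) • x j) k = ∑ j, f (c j) * x j k := by simp [smul_eq_mul]
    _ = ∑ j, f ((x j k) • c j) := by
        refine Finset.sum_congr rfl (fun j _ => ?_)
        rw [map_smul, smul_eq_mul, mul_comm]
    _ = f (∑ j, (x j k) • c j) := by rw [map_sum]
    _ = 0 := by rw [h0, map_zero]

/-- coordinatewise integer cast as a ℤ-linear map -/
def intCastMap (d : ℕ) : (Fin d → ℤ) →ₗ[ℤ] (Fin d → ℝ) where
  toFun a := fun i => (a i : ℝ)
  map_add' a b := by funext i; simp [Pi.add_apply]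
  map_smul' z a := by funext i; simp [zsmul_eq_mul]

lemma intCastMap_apply {d : ℕ} (a : Fin d → ℤ) (i : Fin d) : intCastMap d a i = (a i : ℝ) := rfl

lemma stdLattice_eq_range (d : ℕ) : stdLattice d = Set.range (intCastMap d) := by
  ext x
  constructor
  · intro hx
    choose n hn using hx
    exact ⟨n, by funext i; exact (hn i).symm⟩
  · rintro ⟨a, rfl⟩ i
    exact ⟨a i, rfl⟩

-- image of integer vector lies in ℝ-span of casted basis images
lemma intCast_mem_span {d : ℕ} {ι : Type*} (bM : Module.Basis ι ℤ (Fin d → ℤ)) (v : Fin d → ℤ) :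
    intCastMap d v ∈ Submodule.span ℝ (Set.range (fun j => intCastMap d (bM j))) := by
  have hv : v ∈ Submodule.span ℤ (Set.range bM) := by
    rw [bM.span_eq]; trivial
  refine Submodule.span_induction ?_ ?_ ?_ ?_ hv
  · rintro x ⟨j, rfl⟩
    exact Submodule.subset_span ⟨j, rfl⟩
  · simp only [map_zero]; exact Submodule.zero_mem _
  · intro x y _ _ hx hy
    rw [map_add]; exact Submodule.add_mem _ hx hy
  · intro z x _ hx
    rw [map_smul]
    rw [← Int.cast_smul_eq_zsmul ℝ]
    exact Submodule.smul_mem _ _ hx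

lemma dualAnn_dualCoann {K V : Type*} [Field K] [AddCommGroup V] [Module K V]
    [FiniteDimensional K V] (W : Subspace K (Module.Dual K V)) :
    W.dualCoannihilator.dualAnnihilator = W := by
  have h1 : W ≤ W.dualCoannihilator.dualAnnihilator := by
    intro φ hφ
    rw [Submodule.mem_dualAnnihilator]
    intro x hx
    rw [Submodule.mem_dualCoannihilator] at hx
    exact hx φ hφ
  refine (Submodule.eq_of_le_of_finrank_le h1 ?_).symm
  have h2 : Module.finrank K W + Module.finrank K W.dualCoannihilator = Module.finrank K V :=
    Subspace.finrank_add_finrank_dualCoannihilator_eq W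
  have h3 : Module.finrank K W.dualCoannihilator.dualAnnihilator
      = Module.finrank K (V ⧸ W.dualCoannihilator) :=
    (LinearEquiv.finrank_eq (Subspace.quotEquivAnnihilator W.dualCoannihilator)).symm
  have h4 : Module.finrank K (V ⧸ W.dualCoannihilator) + Module.finrank K W.dualCoannihilator
      = Module.finrank K V := Submodule.finrank_quotient_add_finrank _
  omega

section Corr

variable {d : ℕ} (S : Set (Fin d → ℝ)) (V : Submodule ℝ (Fin d → ℝ))

lemma comp_image (ub : ((Fin d → ℝ) ⧸ V) →ₗ[ℝ] ℝ) :
    (ub.comp V.mkQ) '' S = ub '' (V.mkQ '' S) := by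
  rw [LinearMap.coe_comp, Set.image_comp]

lemma comp_int_iff (ub : ((Fin d → ℝ) ⧸ V) →ₗ[ℝ] ℝ) :
    (∀ a ∈ stdLattice d, ∃ n : ℤ, (ub.comp V.mkQ) a = (n : ℝ)) ↔
      (∀ a ∈ V.mkQ '' stdLattice d, ∃ n : ℤ, ub a = (n : ℝ)) := by
  constructor
  · rintro h a ⟨x, hx, rfl⟩
    exact h x hx
  · intro h x hx
    exact h (V.mkQ x) ⟨x, hx, rfl⟩

lemma comp_ne_zero_iff (ub : ((Fin d → ℝ) ⧸ V) →ₗ[ℝ] ℝ) :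
    ub.comp V.mkQ ≠ 0 ↔ ub ≠ 0 := by
  rw [not_iff_not]
  constructor
  · intro h
    refine LinearMap.ext fun z => ?_
    obtain ⟨x, rfl⟩ := V.mkQ_surjective z
    exact congrFun (congrArg DFunLike.coe h) x
  · rintro rfl; ext x; rfl

lemma comp_isLatticeDir_iff (ub : ((Fin d → ℝ) ⧸ V) →ₗ[ℝ] ℝ) :
    IsLatticeDir (stdLattice d) S (ub.comp V.mkQ) ↔
      IsLatticeDir (V.mkQ '' stdLattice d) (V.mkQ '' S) ub := by
  unfold IsLatticeDir
  rw [comp_ne_zero_iff, comp_int_iff, comp_image]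

lemma comp_dirWidth (ub : ((Fin d → ℝ) ⧸ V) →ₗ[ℝ] ℝ) :
    dirWidth S (ub.comp V.mkQ) = dirWidth (V.mkQ '' S) ub := by
  unfold dirWidth
  rw [comp_image]

variable {S V} in
lemma factor_dir (hV : (V : Set (Fin d → ℝ)) =
      {x | ∀ u : (Fin d → ℝ) →ₗ[ℝ] ℝ, IsLatticeDir (stdLattice d) S u → u x = 0})
    {u : (Fin d → ℝ) →ₗ[ℝ] ℝ} (hu : IsLatticeDir (stdLattice d) S u) :
    ∃ ub : ((Fin d → ℝ) ⧸ V) →ₗ[ℝ] ℝ, ub.comp V.mkQ = u := by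
  have hker : V ≤ LinearMap.ker u := by
    intro x hx
    have : x ∈ (V : Set (Fin d → ℝ)) := hx
    rw [hV] at this
    exact this u hu
  exact ⟨V.liftQ u hker, V.liftQ_mkQ u hker⟩

variable {S V} in
lemma part3 (hV : (V : Set (Fin d → ℝ)) =
      {x | ∀ u : (Fin d → ℝ) →ₗ[ℝ] ℝ, IsLatticeDir (stdLattice d) S u → u x = 0}) :
    latticeWidth (stdLattice d) S = latticeWidth (V.mkQ '' stdLattice d) (V.mkQ '' S) := by
  apply le_antisymm
  · refine le_iInf₂ (fun ub hub => ?_)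
    have h1 := (comp_isLatticeDir_iff S V ub).mpr hub
    have := iInf₂_le (α := EReal) (f := fun u (_ : u ∈ {u | IsLatticeDir (stdLattice d) S u}) =>
      ((dirWidth S u : ℝ) : EReal)) (ub.comp V.mkQ) h1
    rwa [comp_dirWidth S V ub] at this
  · refine le_iInf₂ (fun u hu => ?_)
    obtain ⟨ub, rfl⟩ := factor_dir hV hu
    have h1 := (comp_isLatticeDir_iff S V ub).mp hu
    have := iInf₂_le (α := EReal)
      (f := fun w (_ : w ∈ {w | IsLatticeDir (V.mkQ '' stdLattice d) (V.mkQ '' S) w}) =>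
      ((dirWidth (V.mkQ '' S) w : ℝ) : EReal)) ub h1
    rwa [← comp_dirWidth S V ub] at this

variable {S V} in
lemma part4 (hV : (V : Set (Fin d → ℝ)) =
      {x | ∀ u : (Fin d → ℝ) →ₗ[ℝ] ℝ, IsLatticeDir (stdLattice d) S u → u x = 0}) :
    widthDirs (stdLattice d) S =
      (fun u : ((Fin d → ℝ) ⧸ V) →ₗ[ℝ] ℝ => u.comp V.mkQ) ''
        widthDirs (V.mkQ '' stdLattice d) (V.mkQ '' S) := by
  ext u
  constructor
  · rintro ⟨hdir, heq⟩
    obtain ⟨ub, rfl⟩ := factor_dir hV hdir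
    refine ⟨ub, ⟨(comp_isLatticeDir_iff S V ub).mp hdir, ?_⟩, rfl⟩
    rw [← comp_dirWidth S V ub, heq, part3 hV]
  · rintro ⟨ub, ⟨hdir, heq⟩, rfl⟩
    refine ⟨(comp_isLatticeDir_iff S V ub).mpr hdir, ?_⟩
    rw [comp_dirWidth S V ub, heq, part3 hV]

end Corr

section Bdd
variable {d : ℕ} {S : Set (Fin d → ℝ)} {V : Submodule ℝ (Fin d → ℝ)}

lemma bddAboveBelow_of_abs {u : (Fin d → ℝ) →ₗ[ℝ] ℝ} (h : ∃ C, ∀ x ∈ S, |u x| ≤ C) :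
    BddAbove (u '' S) ∧ BddBelow (u '' S) := by
  obtain ⟨C, hC⟩ := h
  constructor
  · exact ⟨C, by rintro y ⟨x, hx, rfl⟩; exact (abs_le.mp (hC x hx)).2⟩
  · exact ⟨-C, by rintro y ⟨x, hx, rfl⟩; exact (abs_le.mp (hC x hx)).1⟩

lemma span_bdd {u : (Fin d → ℝ) →ₗ[ℝ] ℝ}
    (hu : u ∈ Submodule.span ℝ {w : (Fin d → ℝ) →ₗ[ℝ] ℝ | IsLatticeDir (stdLattice d) S w}) :
    ∃ C, ∀ x ∈ S, |u x| ≤ C := by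
  refine Submodule.span_induction ?_ ?_ ?_ ?_ hu
  · rintro w ⟨-, -, ⟨a, ha⟩, ⟨b, hb⟩⟩
    refine ⟨max a (-b), fun x hx => abs_le.mpr ⟨?_, ?_⟩⟩
    · have := hb (Set.mem_image_of_mem w hx)
      have h2 := le_max_right a (-b)
      linarith
    · exact le_trans (ha (Set.mem_image_of_mem w hx)) (le_max_left a (-b))
  · exact ⟨0, fun x _ => by simp⟩
  · rintro w₁ w₂ - - ⟨C₁, h₁⟩ ⟨C₂, h₂⟩
    refine ⟨C₁ + C₂, fun x hx => ?_⟩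
    calc |(w₁ + w₂) x| = |w₁ x + w₂ x| := rfl
      _ ≤ |w₁ x| + |w₂ x| := abs_add_le _ _
      _ ≤ C₁ + C₂ := add_le_add (h₁ x hx) (h₂ x hx)
  · rintro c w - ⟨C, h⟩
    refine ⟨|c| * C, fun x hx => ?_⟩
    calc |(c • w) x| = |c| * |w x| := by rw [LinearMap.smul_apply, smul_eq_mul, abs_mul]
      _ ≤ |c| * C := mul_le_mul_of_nonneg_left (h x hx) (abs_nonneg c)

lemma hVco (hV : (V : Set (Fin d → ℝ)) =
      {x | ∀ u : (Fin d → ℝ) →ₗ[ℝ] ℝ, IsLatticeDir (stdLattice d) S u → u x = 0}) :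
    V = (Submodule.span ℝ
      {w : (Fin d → ℝ) →ₗ[ℝ] ℝ | IsLatticeDir (stdLattice d) S w}).dualCoannihilator := by
  apply le_antisymm
  · intro x hx
    rw [Submodule.mem_dualCoannihilator]
    intro φ hφ
    refine Submodule.span_induction ?_ rfl ?_ ?_ hφ
    · intro w hw
      have : x ∈ (V : Set (Fin d → ℝ)) := hx
      rw [hV] at this
      exact this w hw
    · intro a b _ _ ha hb; rw [LinearMap.add_apply, ha, hb, add_zero]
    · intro c a _ ha; rw [LinearMap.smul_apply, ha, smul_zero]
  · intro x hx
    rw [Submodule.mem_dualCoannihilator] at hx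
    show x ∈ (V : Set (Fin d → ℝ))
    rw [hV]
    exact fun w hw => hx w (Submodule.subset_span hw)

lemma vanish_bdd (hV : (V : Set (Fin d → ℝ)) =
      {x | ∀ u : (Fin d → ℝ) →ₗ[ℝ] ℝ, IsLatticeDir (stdLattice d) S u → u x = 0})
    {u : (Fin d → ℝ) →ₗ[ℝ] ℝ} (h : ∀ x ∈ V, u x = 0) :
    BddAbove (u '' S) ∧ BddBelow (u '' S) := by
  apply bddAboveBelow_of_abs
  apply span_bdd (S := S)
  rw [← dualAnn_dualCoann (K := ℝ) (V := Fin d → ℝ)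
    (Submodule.span ℝ {w : (Fin d → ℝ) →ₗ[ℝ] ℝ | IsLatticeDir (stdLattice d) S w}),
    ← hVco hV]
  rw [Submodule.mem_dualAnnihilator]
  exact h

lemma part2 (hV : (V : Set (Fin d → ℝ)) =
      {x | ∀ u : (Fin d → ℝ) →ₗ[ℝ] ℝ, IsLatticeDir (stdLattice d) S u → u x = 0}) :
    ({u : (Fin d → ℝ) →ₗ[ℝ] ℝ |
        (∀ a ∈ stdLattice d, ∃ n : ℤ, u a = (n : ℝ)) ∧
        BddAbove (u '' S) ∧ BddBelow (u '' S)} =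
      (fun u : ((Fin d → ℝ) ⧸ V) →ₗ[ℝ] ℝ => u.comp V.mkQ) ''
        {u | ∀ a ∈ V.mkQ '' stdLattice d, ∃ n : ℤ, u a = (n : ℝ)}) := by
  ext u
  constructor
  · rintro ⟨hint, hab, hbb⟩
    by_cases hu0 : u = 0
    · refine ⟨0, fun a _ => ⟨0, by simp⟩, ?_⟩
      rw [hu0]; ext x; rfl
    · obtain ⟨ub, hub⟩ := factor_dir hV ⟨hu0, hint, hab, hbb⟩
      refine ⟨ub, ?_, hub⟩
      rw [← hub] at hint
      exact (comp_int_iff V ub).mp hint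
  · rintro ⟨ub, hubint, rfl⟩
    refine ⟨(comp_int_iff V ub).mpr hubint, ?_⟩
    apply vanish_bdd hV
    intro x hx
    have : V.mkQ x = 0 := (Submodule.Quotient.mk_eq_zero V).mpr hx
    show ub (V.mkQ x) = 0
    rw [this, map_zero]

end Bdd

-- clearing denominators
lemma exists_int_scale {d : ℕ} (q : Fin d → ℚ) :
    ∃ (D : ℤ) (w : Fin d → ℤ), D ≠ 0 ∧
      intCastMap d w = (D : ℝ) • (fun i => ((q i : ℚ) : ℝ)) := by
  have hdvd : ∀ i : Fin d, ∃ z : ℤ, ((∏ k, (q k).den : ℕ) : ℚ) * q i = (z : ℚ) := by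
    intro i
    obtain ⟨e, he⟩ := Finset.dvd_prod_of_mem (fun k => (q k).den) (Finset.mem_univ i)
    refine ⟨(e : ℤ) * (q i).num, ?_⟩
    have hden : ((q i).den : ℚ) * q i = ((q i).num : ℚ) := by
      have h0 := Rat.num_div_den (q i)
      rw [div_eq_iff (Nat.cast_ne_zero.mpr (q i).den_nz : ((q i).den : ℚ) ≠ 0)] at h0
      rw [mul_comm, ← h0]
    rw [he]
    push_cast
    rw [mul_comm ((q i).den : ℚ) (e : ℚ), mul_assoc, hden]
  choose w hw using hdvd
  refine ⟨(∏ k, (q k).den : ℕ), w, ?_, ?_⟩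
  · have : ∀ k, (q k).den ≠ 0 := fun k => (q k).den_nz
    positivity
  · funext i
    have := hw i
    have h2 := congrArg (fun z : ℚ => (z : ℝ)) this
    push_cast at h2
    simp only [intCastMap_apply, Pi.smul_apply, smul_eq_mul]
    push_cast
    linarith [h2]

lemma part1 {d : ℕ} (S : Set (Fin d → ℝ)) (V : Submodule ℝ (Fin d → ℝ))
    (hV : (V : Set (Fin d → ℝ)) =
      {x | ∀ u : (Fin d → ℝ) →ₗ[ℝ] ℝ, IsLatticeDir (stdLattice d) S u → u x = 0}) :
    (∃ b : Module.Basis (Fin (Module.finrank ℝ ((Fin d → ℝ) ⧸ V))) ℝ ((Fin d → ℝ) ⧸ V),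
      V.mkQ '' stdLattice d =
        {y | ∃ n : Fin (Module.finrank ℝ ((Fin d → ℝ) ⧸ V)) → ℤ,
          y = ∑ i, (n i : ℝ) • b i}) := by
  classical
  obtain ⟨t, htU, htspan, htli⟩ :=
    exists_linearIndependent ℝ {w : (Fin d → ℝ) →ₗ[ℝ] ℝ | IsLatticeDir (stdLattice d) S w}
  haveI : Finite ↥t := htli.finite
  haveI : Fintype ↥t := Fintype.ofFinite _
  -- integer coefficients of elements of t
  have hint : ∀ (u : ↥t) (i : Fin d),
      ∃ z : ℤ, (u : (Fin d → ℝ) →ₗ[ℝ] ℝ) (fun j => if i = j then (1:ℝ) else 0) = (z : ℝ) := by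
    intro u i
    have hu := htU u.2
    exact hu.2.1 _ (fun j => ⟨if i = j then 1 else 0, by split <;> simp⟩)
  choose cz hcz using hint
  -- the rational linear system and its kernel
  set F : (Fin d → ℚ) →ₗ[ℚ] (↥t → ℚ) :=
    LinearMap.pi (fun u => ∑ i, (cz u i : ℚ) • LinearMap.proj i) with hF
  have hFapply : ∀ (q : Fin d → ℚ) (u : ↥t), F q u = ∑ i, (cz u i : ℚ) * q i := by
    intro q u
    simp [hF, LinearMap.pi_apply, LinearMap.sum_apply, LinearMap.smul_apply,
      LinearMap.proj_apply, smul_eq_mul]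
  set r := Module.finrank ℚ (LinearMap.ker F) with hr
  let bker : Module.Basis (Fin r) ℚ (LinearMap.ker F) := Module.finBasis ℚ _
  set y : Fin r → (Fin d → ℝ) := fun j => fun i => (((bker j : Fin d → ℚ)) i : ℝ) with hy
  have hyli : LinearIndependent ℝ y :=
    ratLI ((bker.linearIndependent).map' (LinearMap.ker F).subtype (Submodule.ker_subtype _))
  have hyV : ∀ j, y j ∈ V := by
    intro j
    show y j ∈ (V : Set (Fin d → ℝ))
    rw [hV]
    intro u hu
    have huspan : u ∈ Submodule.span ℝ t := by rw [htspan]; exact Submodule.subset_span hu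
    refine Submodule.span_induction ?_ (by simp) (fun a b _ _ ha hb => by
      rw [LinearMap.add_apply, ha, hb, add_zero]) (fun c a _ ha => by
      rw [LinearMap.smul_apply, ha, smul_zero]) huspan
    intro w hw
    have hker : F (bker j : Fin d → ℚ) = 0 := (bker j).2
    have h0 : F (bker j : Fin d → ℚ) (⟨w, hw⟩ : ↥t) = 0 := by rw [hker]; rfl
    rw [hFapply] at h0
    have hcast := congrArg (fun z : ℚ => (z : ℝ)) h0
    push_cast at hcast
    have hLHS : w (y j) = ∑ i, ((cz ⟨w, hw⟩ i : ℤ) : ℝ) * (((bker j : Fin d → ℚ)) i : ℝ) := by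
      rw [LinearMap.pi_apply_eq_sum_univ w (y j)]
      refine Finset.sum_congr rfl fun i _ => ?_
      rw [hcz ⟨w, hw⟩ i]
      simp [hy, smul_eq_mul, mul_comm]
    rw [hLHS]
    exact hcast
  -- dimension count
  have hdim1 : Fintype.card ↥t + Module.finrank ℝ V = d := by
    have h1 := Subspace.finrank_add_finrank_dualCoannihilator_eq
      (Submodule.span ℝ {w : (Fin d → ℝ) →ₗ[ℝ] ℝ | IsLatticeDir (stdLattice d) S w})
    rw [← hVco hV] at h1
    have h2 : Module.finrank ℝ
        (Submodule.span ℝ {w : (Fin d → ℝ) →ₗ[ℝ] ℝ | IsLatticeDir (stdLattice d) S w})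
        = Fintype.card ↥t := by
      rw [← htspan]
      have := finrank_span_eq_card htli
      rwa [Subtype.range_coe] at this
    rw [h2, Module.finrank_fin_fun] at h1
    exact h1
  have hrge : d - Fintype.card ↥t ≤ r := by
    have h1 := LinearMap.finrank_range_add_finrank_ker F
    have h2 : Module.finrank ℚ (Fin d → ℚ) = d := Module.finrank_fin_fun ℚ
    have h3 : Module.finrank ℚ (LinearMap.range F) ≤ Fintype.card ↥t := by
      have := Submodule.finrank_le (LinearMap.range F)
      rwa [Module.finrank_pi] at this
    omega
  -- span of y = V
  have hspanY : Submodule.span ℝ (Set.range y) = V := by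
    refine Submodule.eq_of_le_of_finrank_le (Submodule.span_le.mpr ?_) ?_
    · rintro _ ⟨j, rfl⟩; exact hyV j
    · rw [finrank_span_eq_card hyli, Fintype.card_fin]
      omega
  -- the integer sublattice of V and its Smith normal form
  set N : Submodule ℤ (Fin d → ℤ) := (V.restrictScalars ℤ).comap (intCastMap d) with hN
  obtain ⟨n, bM, bN, f, a, hsnf⟩ := N.smithNormalForm (Pi.basisFun ℤ (Fin d))
  set cb : Fin d → (Fin d → ℝ) := fun j => intCastMap d (bM j) with hcb
  have haf : ∀ i, cb (f i) ∈ V := by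
    intro i
    have h1 : (bN i : Fin d → ℤ) ∈ N := (bN i).2
    have ha0 : a i ≠ 0 := by
      intro h
      refine bN.ne_zero i ?_
      have : (bN i : Fin d → ℤ) = 0 := by rw [hsnf i, h, zero_smul]
      exact Subtype.ext this
    have h3 : intCastMap d ((bN i : Fin d → ℤ)) ∈ V := h1
    rw [hsnf i, map_smul, ← Int.cast_smul_eq_zsmul ℝ] at h3
    have h4 := V.smul_mem ((a i : ℝ))⁻¹ h3
    rwa [inv_smul_smul₀ (by exact_mod_cast ha0)] at h4
  have hNspan : ∀ x ∈ N, intCastMap d x ∈ Submodule.span ℝ (Set.range (fun i => cb (f i))) := by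
    intro x hx
    have hxx : x = ∑ i, bN.repr ⟨x, hx⟩ i • (bN i : Fin d → ℤ) := by
      have := congrArg Subtype.val (bN.sum_repr ⟨x, hx⟩)
      rw [Submodule.coe_sum] at this
      exact this.symm
    rw [hxx, map_sum]
    refine Submodule.sum_mem _ fun i _ => ?_
    rw [map_smul, hsnf i, map_smul, ← Int.cast_smul_eq_zsmul ℝ, ← Int.cast_smul_eq_zsmul ℝ]
    exact Submodule.smul_mem _ _ (Submodule.smul_mem _ _ (Submodule.subset_span ⟨i, rfl⟩))
  have hVspan : V = Submodule.span ℝ (Set.range (fun i => cb (f i))) := by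
    apply le_antisymm
    · rw [← hspanY]
      refine Submodule.span_le.mpr ?_
      rintro _ ⟨j, rfl⟩
      obtain ⟨D, w, hD0, hDw⟩ := exists_int_scale (bker j : Fin d → ℚ)
      have hDw' : intCastMap d w = (D : ℝ) • y j := hDw
      have hwN : w ∈ N := by
        show intCastMap d w ∈ V.restrictScalars ℤ
        rw [hDw']
        exact V.smul_mem _ (hyV j)
      have h1 := hNspan w hwN
      rw [hDw'] at h1
      have h2 := Submodule.smul_mem _ ((D : ℝ))⁻¹ h1
      rwa [inv_smul_smul₀ (by exact_mod_cast hD0)] at h2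
    · refine Submodule.span_le.mpr ?_
      rintro _ ⟨i, rfl⟩
      exact haf i
  -- basis of ℝ^d from bM
  have hcbspan : ⊤ ≤ Submodule.span ℝ (Set.range cb) := by
    rw [← (Pi.basisFun ℝ (Fin d)).span_eq]
    refine Submodule.span_le.mpr ?_
    rintro _ ⟨i, rfl⟩
    have heq : Pi.basisFun ℝ (Fin d) i = intCastMap d (Pi.single i 1) := by
      funext j'
      simp [Pi.basisFun_apply, intCastMap_apply, Pi.single_apply]
    rw [heq]
    exact intCast_mem_span bM _
  have hcard : Fintype.card (Fin d) = Module.finrank ℝ (Fin d → ℝ) := by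
    rw [Fintype.card_fin, Module.finrank_fin_fun]
  let cB := basisOfTopLeSpanOfCardEqFinrank cb hcbspan hcard
  have hcB : ⇑cB = cb := coe_basisOfTopLeSpanOfCardEqFinrank _ _ _
  -- finrank V = n
  have hfV : Module.finrank ℝ V = n := by
    rw [hVspan]
    have h1 : LinearIndependent ℝ cb := by rw [← hcB]; exact cB.linearIndependent
    have h2 : LinearIndependent ℝ (fun i => cb (f i)) := h1.comp f f.injective
    rw [finrank_span_eq_card h2, Fintype.card_fin]
  have hq : Module.finrank ℝ ((Fin d → ℝ) ⧸ V) + Module.finrank ℝ V = d := by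
    have := Submodule.finrank_quotient_add_finrank V
    rwa [Module.finrank_fin_fun] at this
  -- the complement index set
  set p : Fin d → Prop := fun j => j ∈ Set.range ⇑f with hp
  have h5 : Fintype.card {j : Fin d // p j} = n := by
    rw [Fintype.card_congr (Equiv.ofInjective ⇑f f.injective).symm, Fintype.card_fin]
  have hcardJ : Fintype.card {j : Fin d // ¬ p j} = Module.finrank ℝ ((Fin d → ℝ) ⧸ V) := by
    rw [Fintype.card_subtype_compl, h5, Fintype.card_fin]
    omega
  set qb : {j : Fin d // ¬ p j} → ((Fin d → ℝ) ⧸ V) := fun j => V.mkQ (cb j.val) with hqb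
  have hfV0 : ∀ i : Fin n, V.mkQ (cb (f i)) = 0 :=
    fun i => (Submodule.Quotient.mk_eq_zero V).mpr (haf i)
  have hqspan : ⊤ ≤ Submodule.span ℝ (Set.range qb) := by
    rintro z -
    obtain ⟨x, rfl⟩ := V.mkQ_surjective z
    have hx : x = ∑ j, cB.repr x j • cb j := by
      conv_lhs => rw [← cB.sum_repr x]
      simp [hcB]
    rw [hx, map_sum]
    refine Submodule.sum_mem _ fun j _ => ?_
    rw [map_smul]
    by_cases hj : p j
    · obtain ⟨i, rfl⟩ := hj
      rw [hfV0 i, smul_zero]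
      exact Submodule.zero_mem _
    · exact Submodule.smul_mem _ _ (Submodule.subset_span ⟨⟨j, hj⟩, rfl⟩)
  let qB := basisOfTopLeSpanOfCardEqFinrank qb hqspan hcardJ
  have hqB : ⇑qB = qb := coe_basisOfTopLeSpanOfCardEqFinrank _ _ _
  let e : {j : Fin d // ¬ p j} ≃ Fin (Module.finrank ℝ ((Fin d → ℝ) ⧸ V)) :=
    Fintype.equivFinOfCardEq hcardJ
  refine ⟨qB.reindex e, ?_⟩
  have hb : ∀ i, (qB.reindex e) i = qb (e.symm i) := by
    intro i
    rw [Module.Basis.reindex_apply, hqB]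
  -- key computation: image of an integer vector
  have hkey : ∀ v : Fin d → ℤ, V.mkQ (intCastMap d v)
      = ∑ i, ((bM.repr v ((e.symm i).val) : ℤ) : ℝ) • (qB.reindex e) i := by
    intro v
    have hv : v = ∑ jj, bM.repr v jj • bM jj := (bM.sum_repr v).symm
    have step1 : V.mkQ (intCastMap d v) = ∑ jj, ((bM.repr v jj : ℤ) : ℝ) • V.mkQ (cb jj) := by
      conv_lhs => rw [hv]
      rw [map_sum, map_sum]
      refine Finset.sum_congr rfl fun jj _ => ?_
      rw [map_smul, ← Int.cast_smul_eq_zsmul ℝ (bM.repr v jj), map_smul]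
    have step2 : ∑ jj, ((bM.repr v jj : ℤ) : ℝ) • V.mkQ (cb jj)
        = ∑ jj ∈ Finset.univ.filter (fun jj => ¬ p jj),
            ((bM.repr v jj : ℤ) : ℝ) • V.mkQ (cb jj) := by
      refine (Finset.sum_filter_of_ne ?_).symm
      intro jj _ hne hpj
      obtain ⟨i, rfl⟩ := hpj
      rw [hfV0 i, smul_zero] at hne
      exact hne rfl
    have step3 : ∑ jj ∈ Finset.univ.filter (fun jj => ¬ p jj),
            ((bM.repr v jj : ℤ) : ℝ) • V.mkQ (cb jj)
        = ∑ j : {j : Fin d // ¬ p j}, ((bM.repr v j.val : ℤ) : ℝ) • qb j := by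
      refine Finset.sum_subtype _ (fun j => ?_) _
      simp [Finset.mem_filter]
    have step4 : ∑ j : {j : Fin d // ¬ p j}, ((bM.repr v j.val : ℤ) : ℝ) • qb j
        = ∑ i, ((bM.repr v ((e.symm i).val) : ℤ) : ℝ) • (qB.reindex e) i := by
      refine Fintype.sum_equiv e _ _ fun j => ?_
      rw [hb, Equiv.symm_apply_apply]
    rw [step1, step2, step3, step4]
  ext zz
  constructor
  · rintro ⟨x, hx, rfl⟩
    rw [stdLattice_eq_range] at hx
    obtain ⟨v, rfl⟩ := hx
    exact ⟨fun i => bM.repr v ((e.symm i).val), hkey v⟩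
  · rintro ⟨nn, rfl⟩
    refine ⟨intCastMap d (∑ i, nn i • bM ((e.symm i).val)), ?_, ?_⟩
    · rw [stdLattice_eq_range]; exact ⟨_, rfl⟩
    · rw [map_sum, map_sum]
      refine Finset.sum_congr rfl fun i _ => ?_
      rw [map_smul, ← Int.cast_smul_eq_zsmul ℝ (nn i), map_smul, hb]

/-- Let `S ⊆ ℝ^d` be nonempty, let `V` be the common kernel of all lattice directions
    of `S` (the elements of `L(S)`), and let `π : ℝ^d → ℝ^d/V` be the natural
    projection.  Then `Λ = π(ℤ^d)` is a full-rank lattice in `ℝ^d/V`, whose dual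
    lattice is canonically identified with `L(S)` via `u ↦ u ∘ π`; under this
    identification the lattice width of `π(S)` relative to `Λ` equals the lattice
    width of `S` relative to `ℤ^d`, and the lattice width directions of `π(S)`
    correspond exactly to those of `S`. -/
theorem width_projection {d : ℕ} (S : Set (Fin d → ℝ)) (hS : S.Nonempty)
    (V : Submodule ℝ (Fin d → ℝ))
    (hV : (V : Set (Fin d → ℝ)) =
      {x | ∀ u : (Fin d → ℝ) →ₗ[ℝ] ℝ, IsLatticeDir (stdLattice d) S u → u x = 0}) :
    -- `π(ℤ^d)` is a full-rank lattice in `ℝ^d/V`: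
    (∃ b : Module.Basis (Fin (Module.finrank ℝ ((Fin d → ℝ) ⧸ V))) ℝ ((Fin d → ℝ) ⧸ V),
      V.mkQ '' stdLattice d =
        {y | ∃ n : Fin (Module.finrank ℝ ((Fin d → ℝ) ⧸ V)) → ℤ,
          y = ∑ i, (n i : ℝ) • b i}) ∧
    -- its dual lattice is canonically identified with `L(S)` via `u ↦ u ∘ π`:
    ({u : (Fin d → ℝ) →ₗ[ℝ] ℝ |
        (∀ a ∈ stdLattice d, ∃ n : ℤ, u a = (n : ℝ)) ∧
        BddAbove (u '' S) ∧ BddBelow (u '' S)} =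
      (fun u : ((Fin d → ℝ) ⧸ V) →ₗ[ℝ] ℝ => u.comp V.mkQ) ''
        {u | ∀ a ∈ V.mkQ '' stdLattice d, ∃ n : ℤ, u a = (n : ℝ)}) ∧
    -- the lattice width of `S` rel. `ℤ^d` equals that of `π(S)` rel. `Λ`:
    latticeWidth (stdLattice d) S = latticeWidth (V.mkQ '' stdLattice d) (V.mkQ '' S) ∧
    -- under the identification, `S'` equals `π(S)'`:
    widthDirs (stdLattice d) S =
      (fun u : ((Fin d → ℝ) ⧸ V) →ₗ[ℝ] ℝ => u.comp V.mkQ) ''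
        widthDirs (V.mkQ '' stdLattice d) (V.mkQ '' S) := by
  exact ⟨part1 S V hV, part2 hV, part3 hV, part4 hV⟩
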